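/- arXiv:1501.07318 — 3 statements merged into one kernel-verified Lean document; each statement's English description precedes it below -/
import Mathlib

section
/- For u ≥ 1 a positive integer and λ ∈ ℂ, one has Σ_{ℓ=0}^{u+1} C((λ-u)/2 - 1, ℓ)·C(u+1+ℓ, ℓ)·C(2(u+1), u+1-ℓ) = C(2(u+1), u+1) · C((λ+u)/2, u+1). In particular this expression vanishes when λ ∈ {u, u-2, …, -u+2, -u}. -/
/-- Generalized binomial coefficient `C(x, n) = x(x-1)⋯(x-n+1)/n!` for `x : ℂ`. -/
noncomputable def gchoose (x : ℂ) (n : ℕ) : ℂ :=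
  (∏ i ∈ Finset.range n, (x - i)) / (n.factorial : ℂ)

lemma gchoose_zero (x : ℂ) : gchoose x 0 = 1 := by simp [gchoose]

lemma gchoose_pascal (x : ℂ) (k : ℕ) :
    gchoose (x + 1) (k + 1) = gchoose x k + gchoose x (k + 1) := by
  unfold gchoose
  rw [Finset.prod_range_succ' (fun i => x + 1 - (i : ℕ)), Finset.prod_range_succ]
  have h : ∏ i ∈ Finset.range k, (x + 1 - ((i + 1 : ℕ) : ℂ)) =
      ∏ i ∈ Finset.range k, (x - i) := by
    apply Finset.prod_congr rfl
    intro i _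
    push_cast
    ring
  rw [h]
  have h1 : ((k + 1).factorial : ℂ) = (k + 1) * k.factorial := by
    rw [Nat.factorial_succ]; push_cast; ring
  have h2 : ((k : ℂ) + 1) ≠ 0 := by
    exact_mod_cast (Nat.cast_ne_zero (R := ℂ)).mpr (Nat.succ_ne_zero k)
  have h3 : (k.factorial : ℂ) ≠ 0 := Nat.cast_ne_zero.mpr k.factorial_ne_zero
  rw [h1]
  field_simp
  push_cast
  ring

lemma gchoose_vandermonde (a : ℂ) (m : ℕ) : ∀ n : ℕ,
    ∑ ℓ ∈ Finset.range (n + 1), gchoose a ℓ * (m.choose (n - ℓ) : ℂ)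
      = gchoose (a + m) n := by
  induction m with
  | zero =>
    intro n
    rw [Finset.sum_eq_single n]
    · simp
    · intro ℓ hℓ hne
      have hlt : ℓ < n := lt_of_le_of_ne (Nat.lt_succ_iff.mp (Finset.mem_range.mp hℓ)) hne
      rw [Nat.choose_eq_zero_of_lt (by omega)]
      simp
    · intro h
      exact absurd (Finset.self_mem_range_succ n) h
  | succ m ih =>
    intro n
    cases n with
    | zero => simp [gchoose_zero]
    | succ n' =>
      have expand : ∀ ℓ ∈ Finset.range (n' + 1),
          gchoose a ℓ * ((m + 1).choose (n' + 1 - ℓ) : ℂ)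
            = gchoose a ℓ * (m.choose (n' - ℓ) : ℂ)
              + gchoose a ℓ * (m.choose (n' + 1 - ℓ) : ℂ) := by
        intro ℓ hℓ
        have hle : ℓ ≤ n' := Nat.lt_succ_iff.mp (Finset.mem_range.mp hℓ)
        have h1 : n' + 1 - ℓ = (n' - ℓ) + 1 := by omega
        rw [h1, Nat.choose_succ_succ]
        push_cast
        ring
      rw [Finset.sum_range_succ, Finset.sum_congr rfl expand, Finset.sum_add_distrib]
      rw [ih n']
      have h2 : (∑ ℓ ∈ Finset.range (n' + 1), gchoose a ℓ * (m.choose (n' + 1 - ℓ) : ℂ))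
            + gchoose a (n' + 1) * ((m + 1).choose (n' + 1 - (n' + 1)) : ℂ)
          = gchoose (a + m) (n' + 1) := by
        rw [← ih (n' + 1)]
        conv_rhs => rw [Finset.sum_range_succ]
        simp
      rw [add_assoc, h2]
      have hcast : a + ((m + 1 : ℕ) : ℂ) = (a + m) + 1 := by push_cast; ring
      rw [hcast, gchoose_pascal]

lemma gchoose_nat_eq_zero (N n : ℕ) (h : N < n) : gchoose (N : ℂ) n = 0 := by
  unfold gchoose
  rw [Finset.prod_eq_zero (Finset.mem_range.mpr h) (by simp)]
  simp

lemma choose_prod (n ℓ : ℕ) (h : ℓ ≤ n) :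
    ((n + ℓ).choose ℓ : ℂ) * ((2 * n).choose (n - ℓ) : ℂ)
      = ((2 * n).choose n : ℂ) * (n.choose ℓ : ℂ) := by
  rw [Nat.cast_choose ℂ (by omega : ℓ ≤ n + ℓ),
      Nat.cast_choose ℂ (by omega : n - ℓ ≤ 2 * n),
      Nat.cast_choose ℂ (by omega : n ≤ 2 * n),
      Nat.cast_choose ℂ h]
  have e1 : n + ℓ - ℓ = n := by omega
  have e2 : 2 * n - (n - ℓ) = n + ℓ := by omega
  have e3 : 2 * n - n = n := by omega
  rw [e1, e2, e3]
  have f : ∀ k : ℕ, (k.factorial : ℂ) ≠ 0 := fun k => Nat.cast_ne_zero.mpr k.factorial_ne_zero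
  field_simp [f]

theorem stmt3 (u : ℕ) (hu : 1 ≤ u) (lam : ℂ) :
    (∑ ℓ ∈ Finset.range (u + 2),
        gchoose ((lam - u) / 2 - 1) ℓ * ((u + 1 + ℓ).choose ℓ : ℂ)
          * ((2 * (u + 1)).choose (u + 1 - ℓ) : ℂ))
      = ((2 * (u + 1)).choose (u + 1) : ℂ) * gchoose ((lam + u) / 2) (u + 1)
    ∧ ∀ j : ℕ, j ≤ u → lam = (u : ℂ) - 2 * j →
        (∑ ℓ ∈ Finset.range (u + 2),
          gchoose ((lam - u) / 2 - 1) ℓ * ((u + 1 + ℓ).choose ℓ : ℂ)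
            * ((2 * (u + 1)).choose (u + 1 - ℓ) : ℂ)) = 0 := by
  set a : ℂ := (lam - u) / 2 - 1 with ha
  have key : (∑ ℓ ∈ Finset.range (u + 2),
        gchoose a ℓ * ((u + 1 + ℓ).choose ℓ : ℂ)
          * ((2 * (u + 1)).choose (u + 1 - ℓ) : ℂ))
      = ((2 * (u + 1)).choose (u + 1) : ℂ) * gchoose ((lam + u) / 2) (u + 1) := by
    have step : ∀ ℓ ∈ Finset.range (u + 2),
        gchoose a ℓ * ((u + 1 + ℓ).choose ℓ : ℂ) * ((2 * (u + 1)).choose (u + 1 - ℓ) : ℂ)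
          = ((2 * (u + 1)).choose (u + 1) : ℂ)
            * (gchoose a ℓ * (((u + 1).choose (u + 1 - ℓ)) : ℂ)) := by
      intro ℓ hℓ
      have hle : ℓ ≤ u + 1 := by
        have := Finset.mem_range.mp hℓ; omega
      rw [mul_assoc, choose_prod (u + 1) ℓ hle, Nat.choose_symm hle]
      ring
    rw [Finset.sum_congr rfl step, ← Finset.mul_sum]
    have : u + 2 = (u + 1) + 1 := rfl
    rw [this, gchoose_vandermonde a (u + 1) (u + 1)]
    have : a + ((u + 1 : ℕ) : ℂ) = (lam + u) / 2 := by
      rw [ha]; push_cast; ring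
    rw [this]
  refine ⟨key, ?_⟩
  intro j hj hlam
  rw [key]
  have : (lam + u) / 2 = ((u - j : ℕ) : ℂ) := by
    rw [hlam, Nat.cast_sub hj]
    ring
  rw [this, gchoose_nat_eq_zero _ _ (by omega)]
  ring
end

section
/- For the partition μ = [v^m, (v-1)^{u-1-m}] (m parts equal to v followed by u-1-m parts equal to v-1, with 0 ≤ m ≤ u-1, v ≥ 2), the specialisation of the dual Jack polynomial factors as Ξ_X(Q_μ^{(t)}) = ∏_{j=1}^{v-1}[∏_{i=1}^{m} (X + tj - i + 1)/(2u-1-i-t(j-1)) · ∏_{i=m+1}^{u-1} (X + tj - i + 1)/(2u-1-i-tj)] · ∏_{i=1}^{m} (X + u - i + 1)/(t + m - i), when X is set to αp + t with α² = 2t and t = u/v. -/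
/-- The partition `μ = [v^m, (v-1)^{u-1-m}]` as a one-indexed part function. -/
def stairLam (u v m : ℕ) : ℕ → ℕ :=
  fun i => if 1 ≤ i ∧ i ≤ m then v else if m < i ∧ i ≤ u - 1 then v - 1 else 0

/-- The conjugate partition: `μ'_j = #{i : μ_i ≥ j}`. -/
def stairConj (u v m : ℕ) : ℕ → ℕ :=
  fun j => ((Finset.Icc 1 (u - 1)).filter (fun i => j ≤ stairLam u v m i)).card

theorem stmt8 (u v m : ℕ) (hu : 2 ≤ u) (hv : 2 ≤ v) (hcop : Nat.Coprime u v)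
    (hm : m ≤ u - 1) (t α p : ℂ) (ht : t = (u : ℂ) / (v : ℂ)) (hα : α ^ 2 = 2 * t) :
    (∏ i ∈ Finset.Icc 1 (u - 1), ∏ j ∈ Finset.Icc 1 (stairLam u v m i),
        ((α * p + t) + t * ((j : ℂ) - 1) - ((i : ℂ) - 1)) /
          (t * (((stairLam u v m i - j : ℕ) : ℂ) + 1) + ((stairConj u v m j - i : ℕ) : ℂ)))
      = (∏ j ∈ Finset.Icc 1 (v - 1),
          ((∏ i ∈ Finset.Icc 1 m,
              (α * p + t * j - i + 1) / (2 * (u : ℂ) - 1 - i - t * ((j : ℂ) - 1))) *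
           (∏ i ∈ Finset.Icc (m + 1) (u - 1),
              (α * p + t * j - i + 1) / (2 * (u : ℂ) - 1 - i - t * j)))) *
        ∏ i ∈ Finset.Icc 1 m, (α * p + (u : ℂ) - i + 1) / (t + (m : ℂ) - i) := by
  have hv1 : 1 ≤ v := by omega
  have hvC : (v : ℂ) ≠ 0 := Nat.cast_ne_zero.mpr (by omega)
  have htv : t * v = u := by rw [ht]; field_simp
  -- values of stairLam
  have hL1 : ∀ i, 1 ≤ i → i ≤ m → stairLam u v m i = v := by
    intro i h1 h2; simp [stairLam, h1, h2]
  have hL2 : ∀ i, m + 1 ≤ i → i ≤ u - 1 → stairLam u v m i = v - 1 := by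
    intro i h1 h2; simp only [stairLam]
    rw [if_neg (by omega), if_pos (by omega)]
  -- values of stairConj
  have hC1 : ∀ j, 1 ≤ j → j ≤ v - 1 → stairConj u v m j = u - 1 := by
    intro j h1 h2
    have : (Finset.Icc 1 (u - 1)).filter (fun i => j ≤ stairLam u v m i)
        = Finset.Icc 1 (u - 1) := by
      apply Finset.filter_true_of_mem
      intro i hi
      simp only [Finset.mem_Icc] at hi
      rcases le_or_gt i m with h | h
      · rw [hL1 i hi.1 h]; omega
      · rw [hL2 i (by omega) hi.2]; omega
    simp [stairConj, this]
  have hC2 : stairConj u v m v = m := by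
    have : (Finset.Icc 1 (u - 1)).filter (fun i => v ≤ stairLam u v m i)
        = Finset.Icc 1 m := by
      ext i
      simp only [Finset.mem_filter, Finset.mem_Icc]
      constructor
      · rintro ⟨⟨h1, h2⟩, h3⟩
        refine ⟨h1, ?_⟩
        by_contra h
        rw [hL2 i (by omega) h2] at h3; omega
      · rintro ⟨h1, h2⟩
        exact ⟨⟨h1, by omega⟩, by rw [hL1 i h1 h2]⟩
    simp [stairConj, this]
  -- split the index set on the left
  have hsplit : Finset.Icc 1 (u - 1) = Finset.Icc 1 m ∪ Finset.Icc (m + 1) (u - 1) := by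
    ext i; simp only [Finset.mem_union, Finset.mem_Icc]; omega
  have hdisj : Disjoint (Finset.Icc 1 m) (Finset.Icc (m + 1) (u - 1)) := by
    rw [Finset.disjoint_left]
    intro i h1 h2
    simp only [Finset.mem_Icc] at h1 h2; omega
  rw [hsplit, Finset.prod_union hdisj]
  -- for i ≤ m, split off the j = v term
  have hstep1 : ∀ i ∈ Finset.Icc 1 m,
      (∏ j ∈ Finset.Icc 1 (stairLam u v m i),
        ((α * p + t) + t * ((j : ℂ) - 1) - ((i : ℂ) - 1)) /
          (t * (((stairLam u v m i - j : ℕ) : ℂ) + 1) + ((stairConj u v m j - i : ℕ) : ℂ)))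
      = (∏ j ∈ Finset.Icc 1 (v - 1),
          (α * p + t * j - i + 1) / (2 * (u : ℂ) - 1 - i - t * ((j : ℂ) - 1)))
        * ((α * p + (u : ℂ) - i + 1) / (t + (m : ℂ) - i)) := by
    intro i hi
    simp only [Finset.mem_Icc] at hi
    rw [hL1 i hi.1 hi.2]
    have hins : Finset.Icc 1 v = insert v (Finset.Icc 1 (v - 1)) := by
      ext x; simp only [Finset.mem_insert, Finset.mem_Icc]; omega
    have hnotmem : v ∉ Finset.Icc 1 (v - 1) := by
      simp only [Finset.mem_Icc]; omega
    rw [hins, Finset.prod_insert hnotmem, mul_comm]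
    congr 1
    · apply Finset.prod_congr rfl
      intro j hj
      simp only [Finset.mem_Icc] at hj
      rw [hC1 j hj.1 hj.2]
      have h1 : (((v - j : ℕ) : ℂ)) = (v : ℂ) - j := by
        push_cast [Nat.cast_sub (by omega : j ≤ v)]; ring
      have h2 : (((u - 1 - i : ℕ) : ℂ)) = (u : ℂ) - 1 - i := by
        push_cast [Nat.cast_sub (by omega : i ≤ u - 1), Nat.cast_sub (by omega : 1 ≤ u)]
        ring
      rw [h1, h2]
      congr 1
      · ring
      · linear_combination htv
    · -- j = v term
      rw [Nat.sub_self, hC2]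
      have hnum : α * p + t + t * ((v : ℂ) - 1) - ((i : ℂ) - 1) = α * p + (u : ℂ) - i + 1 := by
        linear_combination htv
      rw [hnum]
      congr 1
      have h3 : (((m - i : ℕ) : ℂ)) = (m : ℂ) - i := by
        push_cast [Nat.cast_sub (by omega : i ≤ m)]; ring
      rw [Nat.cast_zero, h3]; ring
  -- for i > m
  have hstep2 : ∀ i ∈ Finset.Icc (m + 1) (u - 1),
      (∏ j ∈ Finset.Icc 1 (stairLam u v m i),
        ((α * p + t) + t * ((j : ℂ) - 1) - ((i : ℂ) - 1)) /
          (t * (((stairLam u v m i - j : ℕ) : ℂ) + 1) + ((stairConj u v m j - i : ℕ) : ℂ)))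
      = ∏ j ∈ Finset.Icc 1 (v - 1),
          (α * p + t * j - i + 1) / (2 * (u : ℂ) - 1 - i - t * (j : ℂ)) := by
    intro i hi
    simp only [Finset.mem_Icc] at hi
    rw [hL2 i hi.1 hi.2]
    apply Finset.prod_congr rfl
    intro j hj
    simp only [Finset.mem_Icc] at hj
    rw [hC1 j hj.1 hj.2]
    have h1 : (((v - 1 - j : ℕ) : ℂ)) = (v : ℂ) - 1 - j := by
      push_cast [Nat.cast_sub (by omega : j ≤ v - 1), Nat.cast_sub (by omega : 1 ≤ v)]
      ring
    have h2 : (((u - 1 - i : ℕ) : ℂ)) = (u : ℂ) - 1 - i := by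
      push_cast [Nat.cast_sub (by omega : i ≤ u - 1), Nat.cast_sub (by omega : 1 ≤ u)]
      ring
    rw [h1, h2]
    congr 1
    · ring
    · linear_combination htv
  rw [Finset.prod_congr rfl hstep1, Finset.prod_congr rfl hstep2]
  rw [Finset.prod_mul_distrib, Finset.prod_mul_distrib]
  conv_lhs => rw [Finset.prod_comm]
  conv_lhs => rw [Finset.prod_comm (s := Finset.Icc (m + 1) (u - 1))]
  ring
end

section
/- Let g(u) be defined by g(0)=0, g(1)=1 and g(u+2) = ((2u+1)λ/(u+1)²)·g(u+1) − ((4tΔ+1−u²)/(u+1)²)·g(u), and set Δ_{r,0} = (r²-1)/(4t) for a positive integer r. Then for every u ≥ 1, r with 1 ≤ r ≤ u-1, and λ ∈ {r-1, r-3, …, -r+3, -r+1}, one has g(u)(λ, Δ_{r,0}) = 0. -/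
open MvPolynomial

/-- The polynomials `g(u) ∈ ℂ[λ, Δ]` (with `X 0 = λ`, `X 1 = Δ`) defined by
`g(0)=0`, `g(1)=1` and the recursion
`g(u+2) = ((2u+1)λ/(u+1)²)·g(u+1) − ((4tΔ + 1 − u²)/(u+1)²)·g(u)`. -/
noncomputable def gpoly (t : ℂ) : ℕ → MvPolynomial (Fin 2) ℂ
  | 0 => 0
  | 1 => 1
  | (u + 2) =>
      C ((2 * (u : ℂ) + 1) / ((u : ℂ) + 1) ^ 2) * X 0 * gpoly t (u + 1)
        - C ((((u : ℂ) + 1) ^ 2)⁻¹) * (C (4 * t) * X 1 + C (1 - (u : ℂ) ^ 2)) * gpoly t u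

set_option maxHeartbeats 1000000 in
lemma genid (q w jc mc s vc X Xq A1 A2 B0 Y Yk Z Z1 Z2 Qp0 Qp1 : ℂ)
    (hq : q+1 ≠ 0) (hw1 : w+1 ≠ 0) (hw2 : w+2 ≠ 0)
    (hv : vc = q+1+w)
    (hXq : (q+1)*X = (w+1)*Xq)
    (hA1 : A1 = Xq + X)
    (hB0 : (q+1)*A1 = (w+2)*B0)
    (hA2 : A2 = B0 + A1)
    (hY : (q+1)*Yk = (jc-q)*Y)
    (hZ1 : (w+1)*Z1 = (mc-w)*Z)
    (hZ2 : (w+2)*Z2 = (mc-w-1)*Z1)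
    (hQ0 : Qp0 = ((jc*(vc+1) + 3*jc*(vc+1)^2 - 2*jc*(vc+1)^3 + jc^2*(vc+1)^2 + mc*jc*(vc+1) + 4*mc*jc*(vc+1)^2) + (-(vc+1) - 3*(vc+1)^2 + 2*(vc+1)^3 - 3*jc*(vc+1) + 2*jc*(vc+1)^2 - 2*jc^2*(vc+1) - mc*(vc+1) - 4*mc*(vc+1)^2 - 4*mc*jc*(vc+1))*(q) + (3*(vc+1) - 3*(vc+1)^2 + jc + jc*(vc+1) + jc^2 + 4*mc*(vc+1) + mc*jc)*(q)^2 + (-1 + (vc+1) - jc - mc)*(q)^3))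
    (hQ1 : Qp1 = ((jc*(vc+1) + 3*jc*(vc+1)^2 - 2*jc*(vc+1)^3 + jc^2*(vc+1)^2 + mc*jc*(vc+1) + 4*mc*jc*(vc+1)^2) + (-(vc+1) - 3*(vc+1)^2 + 2*(vc+1)^3 - 3*jc*(vc+1) + 2*jc*(vc+1)^2 - 2*jc^2*(vc+1) - mc*(vc+1) - 4*mc*(vc+1)^2 - 4*mc*jc*(vc+1))*(q+1) + (3*(vc+1) - 3*(vc+1)^2 + jc + jc*(vc+1) + jc^2 + 4*mc*(vc+1) + mc*jc)*(q+1)^2 + (-1 + (vc+1) - jc - mc)*(q+1)^3)) :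
    (vc+2)^2 * ((-s) * A2 * Yk * Z2) - (2*vc+3)*(mc-jc)*((-s) * A1 * Yk * Z1)
      + ((mc+jc+1)^2-(vc+1)^2) * ((-s) * X * Yk * Z)
    = Qp1 * (-s) * X * Yk * Z / (w+1)^2 - Qp0 * s * Xq * Y * Z1 / (w+2)^2 := by
  subst hv hA1 hA2 hQ0 hQ1
  rw [div_sub_div _ _ (pow_ne_zero 2 hw1) (pow_ne_zero 2 hw2),
    eq_div_iff (mul_ne_zero (pow_ne_zero 2 hw1) (pow_ne_zero 2 hw2))]
  obtain ⟨X2, rfl⟩ : ∃ X2, X = (w+1)*((w+2)*X2) := ⟨X/((w+1)*(w+2)), by field_simp⟩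
  obtain ⟨Y2, rfl⟩ : ∃ Y2, Y = (q+1)*Y2 := ⟨Y/(q+1), by field_simp⟩
  obtain ⟨Z0, rfl⟩ : ∃ Z0, Z = (w+1)*((w+2)*Z0) := ⟨Z/((w+1)*(w+2)), by field_simp⟩
  have eXq : Xq = (q+1)*((w+2)*X2) := by
    apply mul_left_cancel₀ hw1; linear_combination -hXq
  rw [eXq] at hB0 ⊢
  have eB0' : B0 = (q+1)*((q+1)*X2 + (w+1)*X2) := by
    apply mul_left_cancel₀ hw2; linear_combination -hB0
  rw [eB0']
  have eYk : Yk = (jc-q)*Y2 := by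
    apply mul_left_cancel₀ hq; linear_combination hY
  have eZ1 : Z1 = (mc-w)*((w+2)*Z0) := by
    apply mul_left_cancel₀ hw1; linear_combination hZ1
  rw [eZ1] at hZ2
  have eZ2 : Z2 = (mc-w-1)*((mc-w)*Z0) := by
    apply mul_left_cancel₀ hw2; linear_combination hZ2
  rw [eYk, eZ1, eZ2]
  ring

/-- the Zeilberger certificate polynomial (with u = v+1). -/
noncomputable def PP (j m v k : ℕ) : ℂ :=
  let u : ℂ := (v:ℂ)+1
  let jc : ℂ := (j:ℂ)
  let mc : ℂ := (m:ℂ)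
  let kc : ℂ := (k:ℂ)
  (jc*u + 3*jc*u^2 - 2*jc*u^3 + jc^2*u^2 + mc*jc*u + 4*mc*jc*u^2)
  + (-u - 3*u^2 + 2*u^3 - 3*jc*u + 2*jc*u^2 - 2*jc^2*u - mc*u - 4*mc*u^2 - 4*mc*jc*u) * kc
  + (3*u - 3*u^2 + jc + jc*u + jc^2 + 4*mc*u + mc*jc) * kc^2
  + (-1 + u - jc - mc) * kc^3

/-- absorption identity for binomial coefficients, unconditionally over ℂ. -/
lemma ch_succ (n k : ℕ) :
    ((k:ℂ)+1) * (n.choose (k+1) : ℂ) = ((n:ℂ) - (k:ℂ)) * (n.choose k : ℂ) := by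
  rcases le_or_gt k n with h | h
  · have h2 := Nat.choose_succ_right_eq n k
    calc ((k:ℂ)+1) * (n.choose (k+1):ℂ)
        = ((n.choose (k+1) * (k+1) : ℕ) : ℂ) := by push_cast; ring
      _ = ((n.choose k * (n-k) : ℕ):ℂ) := by rw [h2]
      _ = ((n:ℂ)-(k:ℂ)) * (n.choose k:ℂ) := by push_cast [Nat.cast_sub h]; ring
  · simp [Nat.choose_eq_zero_of_lt (show n < k+1 by omega), Nat.choose_eq_zero_of_lt h]

noncomputable def Tf (j m u k : ℕ) : ℂ :=
  (-1:ℂ)^k * (u.choose k : ℂ) * (j.choose k : ℂ) * (m.choose (u-k) : ℂ)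

noncomputable def Ff (j m u : ℕ) : ℂ := ∑ k ∈ Finset.range (u+1), Tf j m u k

noncomputable def gC (j m v k : ℕ) : ℂ :=
  if k ≤ v then
    PP j m v k * (-1:ℂ)^k * (v.choose k : ℂ) * (j.choose k : ℂ) * (m.choose (v-k) : ℂ)
      / ((v:ℂ) + 1 - (k:ℂ))^2
  else if k = v+1 then (-1:ℂ)^(v+1) * ((v:ℂ)+2)^2 * (j.choose (v+2) : ℂ)
  else 0

noncomputable def gtel (j m v : ℕ) : ℕ → ℂ
  | 0 => 0
  | (k+1) => gC j m v k

set_option maxHeartbeats 1000000 in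
lemma tele (j m v k : ℕ) (hk : k < v+3) :
    ((v:ℂ)+2)^2 * Tf j m (v+2) k - (2*(v:ℂ)+3)*((m:ℂ)-(j:ℂ)) * Tf j m (v+1) k
      + (((m:ℂ)+(j:ℂ)+1)^2 - ((v:ℂ)+1)^2) * Tf j m v k
      = gtel j m v (k+1) - gtel j m v k := by
  have hq1 : ∀ q : ℕ, ((q:ℂ)+1) ≠ 0 := fun q => by exact_mod_cast Nat.succ_ne_zero q
  have hq2 : ∀ q : ℕ, ((q:ℂ)+2) ≠ 0 := fun q => by exact_mod_cast Nat.succ_ne_zero (q+1)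
  by_cases h0 : k = 0
  · subst h0
    have g1 : gtel j m v 1 = gC j m v 0 := rfl
    have g0 : gtel j m v 0 = 0 := rfl
    rw [g1, g0]
    simp only [gC, if_pos (Nat.zero_le v), Tf, Nat.sub_zero, Nat.choose_zero_right]
    have e5 : (m.choose (v+2) : ℂ) = ((m:ℂ)-(v:ℂ)-1)*(m.choose (v+1)) / ((v:ℂ)+2) := by
      rw [eq_div_iff (hq2 v)]
      have := ch_succ m (v+1); push_cast at this; linear_combination this
    have e4 : (m.choose (v+1) : ℂ) = ((m:ℂ)-(v:ℂ))*(m.choose v) / ((v:ℂ)+1) := by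
      rw [eq_div_iff (hq1 v)]
      have := ch_succ m v; push_cast at this; linear_combination this
    rw [e5, e4]
    simp only [PP]
    push_cast
    field_simp [hq1 v, hq2 v]
    ring
  · by_cases hv1 : k = v+1
    · subst hv1
      have g2 : gtel j m v (v+1+1) = gC j m v (v+1) := rfl
      have g1 : gtel j m v (v+1) = gC j m v v := rfl
      rw [g2, g1]
      simp only [gC, if_neg (show ¬ (v+1 ≤ v) by omega), if_pos rfl, if_pos (le_refl v)]
      simp only [Tf, Nat.choose_self, Nat.choose_succ_self,
        Nat.choose_succ_self_right, show v+2-(v+1) = 1 by omega,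
        show v+1-(v+1) = 0 by omega, show v - v = 0 by omega, Nat.choose_zero_right,
        Nat.choose_one_right]
      have hden : ((v:ℂ) + 1 - (v:ℂ))^2 = 1 := by ring
      rw [hden, div_one]
      have e3 : (j.choose (v+1) : ℂ) = ((j:ℂ)-(v:ℂ))*(j.choose v) / ((v:ℂ)+1) := by
        rw [eq_div_iff (hq1 v)]
        have := ch_succ j v; push_cast at this; linear_combination this
      have e3' : (j.choose (v+2) : ℂ) = ((j:ℂ)-(v:ℂ)-1)*(j.choose (v+1)) / ((v:ℂ)+2) := by
        rw [eq_div_iff (hq2 v)]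
        have := ch_succ j (v+1); push_cast at this; linear_combination this
      rw [e3', e3]
      simp only [PP]
      push_cast
      field_simp [hq1 v, hq2 v]
      ring
    · by_cases hv2 : k = v+2
      · subst hv2
        have g2 : gtel j m v (v+2+1) = gC j m v (v+2) := rfl
        have g1 : gtel j m v (v+2) = gC j m v (v+1) := rfl
        rw [g2, g1]
        simp only [gC, if_neg (show ¬ (v+2 ≤ v) by omega),
          if_neg (show ¬ (v+2 = v+1) by omega), if_neg (show ¬ (v+1 ≤ v) by omega),
          if_pos rfl]
        simp only [Tf, Nat.choose_self, Nat.choose_succ_self,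
          show v+2-(v+2) = 0 by omega, Nat.choose_zero_right,
          Nat.choose_eq_zero_of_lt (show v+1 < v+2 by omega),
          Nat.choose_eq_zero_of_lt (show v < v+2 by omega)]
        push_cast
        ring
      · -- generic case : 1 ≤ k ≤ v
        obtain ⟨q, rfl⟩ : ∃ q, k = q+1 := ⟨k-1, by omega⟩
        obtain ⟨w, rfl⟩ : ∃ w, v = q+1+w := ⟨v-(q+1), by omega⟩
        have g2 : gtel j m (q+1+w) (q+1+1) = gC j m (q+1+w) (q+1) := rfl
        have g1 : gtel j m (q+1+w) (q+1) = gC j m (q+1+w) q := rfl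
        rw [g2, g1]
        simp only [gC, if_pos (show q+1 ≤ q+1+w by omega), if_pos (show q ≤ q+1+w by omega)]
        simp only [Tf, show q+1+w+2-(q+1) = w+2 by omega, show q+1+w+1-(q+1) = w+1 by omega,
          show q+1+w-(q+1) = w by omega, show q+1+w-q = w+1 by omega]
        have hd1 : ((q+1+w : ℕ):ℂ) + 1 - ((q+1:ℕ):ℂ) = (w:ℂ)+1 := by push_cast; ring
        have hd2 : ((q+1+w : ℕ):ℂ) + 1 - ((q:ℕ):ℂ) = (w:ℂ)+2 := by push_cast; ring
        rw [hd1, hd2]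
        have hXq : ((q:ℂ)+1) * ((q+1+w).choose (q+1) : ℂ)
            = ((w:ℂ)+1) * ((q+1+w).choose q : ℂ) := by
          have := ch_succ (q+1+w) q; push_cast at this; linear_combination this
        have hA1 : ((q+1+w+1).choose (q+1) : ℂ)
            = ((q+1+w).choose q : ℂ) + ((q+1+w).choose (q+1) : ℂ) := by
          exact_mod_cast Nat.choose_succ_succ (q+1+w) q
        have hB0 : ((q:ℂ)+1) * ((q+1+w+1).choose (q+1) : ℂ)
            = ((w:ℂ)+2) * ((q+1+w+1).choose q : ℂ) := by
          have := ch_succ (q+1+w+1) q; push_cast at this; linear_combination this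
        have hA2 : ((q+1+w+2).choose (q+1) : ℂ)
            = ((q+1+w+1).choose q : ℂ) + ((q+1+w+1).choose (q+1) : ℂ) := by
          exact_mod_cast Nat.choose_succ_succ (q+1+w+1) q
        have hZ2 : ((w:ℂ)+2) * (m.choose (w+2) : ℂ)
            = ((m:ℂ)-(w:ℂ)-1) * (m.choose (w+1) : ℂ) := by
          have := ch_succ m (w+1); push_cast at this; linear_combination this
        have key := genid (q:ℂ) (w:ℂ) (j:ℂ) (m:ℂ) ((-1:ℂ)^q) ((q+1+w : ℕ):ℂ)
          ((q+1+w).choose (q+1) : ℂ) ((q+1+w).choose q : ℂ)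
          ((q+1+w+1).choose (q+1) : ℂ) ((q+1+w+2).choose (q+1) : ℂ)
          ((q+1+w+1).choose q : ℂ)
          (j.choose q : ℂ) (j.choose (q+1) : ℂ)
          (m.choose w : ℂ) (m.choose (w+1) : ℂ) (m.choose (w+2) : ℂ)
          (PP j m (q+1+w) q) (PP j m (q+1+w) (q+1))
          (hq1 q) (hq1 w) (hq2 w)
          (by push_cast; ring)
          hXq hA1 hB0 hA2 (ch_succ j q) (ch_succ m w) hZ2
          (by simp only [PP])
          (by simp only [PP]; push_cast; ring)
        linear_combination key

lemma Tf_zero (j m u k : ℕ) (h : u < k) : Tf j m u k = 0 := by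
  simp [Tf, Nat.choose_eq_zero_of_lt h]

lemma Frec (j m v : ℕ) :
    ((v:ℂ)+2)^2 * Ff j m (v+2) = (2*(v:ℂ)+3)*((m:ℂ)-(j:ℂ)) * Ff j m (v+1)
      - (((m:ℂ)+(j:ℂ)+1)^2 - ((v:ℂ)+1)^2) * Ff j m v := by
  have h1 : Ff j m (v+1) = ∑ k ∈ Finset.range (v+3), Tf j m (v+1) k := by
    rw [Ff, Finset.sum_range_succ (n := v+2), Tf_zero j m (v+1) (v+2) (by omega), add_zero]
  have h0 : Ff j m v = ∑ k ∈ Finset.range (v+3), Tf j m v k := by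
    rw [Ff, Finset.sum_range_succ (n := v+2), Finset.sum_range_succ (n := v+1),
      Tf_zero j m v (v+2) (by omega), Tf_zero j m v (v+1) (by omega), add_zero, add_zero]
  have h2 : Ff j m (v+2) = ∑ k ∈ Finset.range (v+3), Tf j m (v+2) k := rfl
  rw [h0, h1, h2, Finset.mul_sum, Finset.mul_sum, Finset.mul_sum]
  rw [eq_sub_iff_add_eq, ← Finset.sum_add_distrib, ← sub_eq_zero, ← Finset.sum_sub_distrib]
  have : ∀ k ∈ Finset.range (v+3),
      (((v:ℂ)+2)^2 * Tf j m (v+2) k + (((m:ℂ)+(j:ℂ)+1)^2 - ((v:ℂ)+1)^2) * Tf j m v k)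
        - (2*(v:ℂ)+3)*((m:ℂ)-(j:ℂ)) * Tf j m (v+1) k
      = gtel j m v (k+1) - gtel j m v k := by
    intro k hk
    have := tele j m v k (Finset.mem_range.mp hk)
    linear_combination this
  rw [Finset.sum_congr rfl this, Finset.sum_range_sub (gtel j m v) (v+3)]
  have gz : gtel j m v (v+3) = gC j m v (v+2) := rfl
  rw [gz]
  simp [gC, show ¬ (v+2 ≤ v) by omega, show ¬ (v+2 = v+1) by omega, gtel]

lemma Fvanish (j m u : ℕ) (h : m + j + 1 ≤ u) : Ff j m u = 0 := by
  apply Finset.sum_eq_zero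
  intro k _
  by_cases hk : k ≤ j
  · have : m < u - k := by omega
    simp [Tf, Nat.choose_eq_zero_of_lt this]
  · simp [Tf, Nat.choose_eq_zero_of_lt (show j < k by omega)]

noncomputable def fs (j m : ℕ) : ℕ → ℂ
  | 0 => 0
  | (u+1) => Ff j m u

lemma main_eq (t : ℂ) (j m : ℕ) (lam del : ℂ)
    (hlam : lam = (m:ℂ) - (j:ℂ))
    (hdel : 4 * t * del = ((m:ℂ)+(j:ℂ)+1)^2 - 1) :
    ∀ u, MvPolynomial.eval (fun i : Fin 2 => if i = 0 then lam else del) (gpoly t u)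
      = fs j m u := by
  intro u
  induction u using Nat.twoStepInduction with
  | zero => simp [gpoly, fs]
  | one =>
    have : fs j m 1 = Ff j m 0 := rfl
    rw [this]
    simp [gpoly, Ff, Tf]
  | more n ih1 ih2 =>
    have hne : ((n:ℂ)+1) ≠ 0 := by exact_mod_cast Nat.succ_ne_zero n
    have hrec : ((n:ℂ)+1)^2 * MvPolynomial.eval
          (fun i : Fin 2 => if i = 0 then lam else del) (gpoly t (n+2))
        = (2*(n:ℂ)+1) * lam
            * MvPolynomial.eval (fun i : Fin 2 => if i = 0 then lam else del) (gpoly t (n+1))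
          - (4*t*del + (1-(n:ℂ)^2))
            * MvPolynomial.eval (fun i : Fin 2 => if i = 0 then lam else del) (gpoly t n) := by
      simp only [gpoly, map_sub, map_mul, map_add, eval_C, eval_X]
      norm_num
      field_simp
    apply mul_left_cancel₀ (pow_ne_zero 2 hne)
    rw [hrec, ih1, ih2, hdel]
    match n with
    | 0 =>
      have f2 : fs j m 2 = Ff j m 1 := rfl
      have f1 : fs j m 1 = Ff j m 0 := rfl
      have f0 : fs j m 0 = 0 := rfl
      rw [f2, f1, f0]
      simp [Ff, Finset.sum_range_succ, Tf, Nat.choose_one_right, hlam]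
      ring
    | (v+1) =>
      have f2 : fs j m (v+3) = Ff j m (v+2) := rfl
      have f1 : fs j m (v+2) = Ff j m (v+1) := rfl
      have f0 : fs j m (v+1) = Ff j m v := rfl
      rw [f2, f1, f0, hlam]
      have key := Frec j m v
      push_cast
      linear_combination -key

theorem stmt14 (t : ℂ) (ht : t ≠ 0) (u r j : ℕ) (hu : 1 ≤ u)
    (hr1 : 1 ≤ r) (hr2 : r ≤ u - 1) (hj : j < r) :
    MvPolynomial.eval
      (fun i : Fin 2 => if i = 0 then ((r : ℂ) - 1 - 2 * j) else ((r : ℂ) ^ 2 - 1) / (4 * t))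
      (gpoly t u) = 0 := by
  obtain ⟨m, rfl⟩ : ∃ m, r = m + j + 1 := ⟨r - j - 1, by omega⟩
  have h4t : (4:ℂ)*t ≠ 0 := by
    apply mul_ne_zero _ ht
    norm_num
  have hfun : (fun i : Fin 2 => if i = 0 then (((m+j+1:ℕ) : ℂ) - 1 - 2 * (j:ℂ))
        else (((m+j+1:ℕ) : ℂ) ^ 2 - 1) / (4 * t))
      = (fun i : Fin 2 => if i = 0 then ((m:ℂ) - (j:ℂ))
        else (((m:ℂ)+(j:ℂ)+1)^2 - 1) / (4 * t)) := by
    funext i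
    by_cases hi : i = 0
    · simp only [hi, if_pos]
      push_cast
      ring
    · simp only [if_neg hi]
      push_cast
      ring
  rw [hfun, main_eq t j m ((m:ℂ) - (j:ℂ)) ((((m:ℂ)+(j:ℂ)+1)^2 - 1) / (4 * t)) rfl
    (by field_simp) u]
  obtain ⟨d, rfl⟩ : ∃ d, u = d+1 := ⟨u-1, by omega⟩
  have : fs j m (d+1) = Ff j m d := rfl
  rw [this]
  exact Fvanish j m d (by omega)
end
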